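/- Let G be a group, g ∈ G, and V a finite-dimensional complex representation of G. If C_* is a bounded complex of finitely generated free ℂG-modules with Euler characteristic χ := Σ_n (−1)^n rk(C_n) = 0, then for any two ℂG-bases of each C_n that differ by permutations, signs, and multiplication of basis elements by group elements, the alternating product over n of the products of |det_ℂ(l_{g(b)} : V → V)| over the translating group elements g(b) depends only on the image of Π g(b)^{(−1)^n} in H₁(G)/torsion; in particular, if additionally the homomorphism D_V : H₁(G)_f → ℝ, ḡ ↦ ln|det_ℂ(l_g : V → V)| vanishes, this alternating product equals 1. -/

import Mathlib

/-- Given a finite-dimensional complex representation `ρ` of `G` and, for each degree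
`n < N`, a family of translating group elements `g n b` (resp. `g' n b`) coming from two
cellularly equivalent choices of bases of a based complex with vanishing Euler
characteristic, the alternating product `∏_n (∏_b |det(l_{g n b})|)^{(−1)^n}` depends only
on the image of `∏_n (∏_b g n b)^{(−1)^n}` in `H₁(G)_f = Abelianization(G)/torsion`.
In particular, if `D_V` vanishes (i.e. `|det(l_h)| = 1` for all `h`), the alternating
product equals `1`. -/
theorem stmt18 {G : Type*} [Group G] {V : Type*} [AddCommGroup V] [Module ℂ V]
    [FiniteDimensional ℂ V] (ρ : Representation ℂ G V)
    (N : ℕ) (r r' : Fin N → ℕ)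
    (g : (n : Fin N) → Fin (r n) → G) (g' : (n : Fin N) → Fin (r' n) → G)
    (hχ : ∑ n : Fin N, (-1 : ℤ) ^ (n : ℕ) * (r n : ℤ) = 0)
    (hχ' : ∑ n : Fin N, (-1 : ℤ) ^ (n : ℕ) * (r' n : ℤ) = 0)
    (htrans :
      (∏ n : Fin N, (∏ b, (QuotientGroup.mk' (CommGroup.torsion (Abelianization G)))
          (Abelianization.of (g n b))) ^ ((-1 : ℤ) ^ (n : ℕ)))
      = ∏ n : Fin N, (∏ b, (QuotientGroup.mk' (CommGroup.torsion (Abelianization G)))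
          (Abelianization.of (g' n b))) ^ ((-1 : ℤ) ^ (n : ℕ))) :
    (∏ n : Fin N, (∏ b, ‖LinearMap.det (ρ (g n b))‖) ^ ((-1 : ℤ) ^ (n : ℕ)))
      = (∏ n : Fin N,
          (∏ b, ‖LinearMap.det (ρ (g' n b))‖) ^ ((-1 : ℤ) ^ (n : ℕ))) ∧
    ((∀ h : G, ‖LinearMap.det (ρ h)‖ = 1) →
      (∏ n : Fin N,
        (∏ b, ‖LinearMap.det (ρ (g n b))‖) ^ ((-1 : ℤ) ^ (n : ℕ))) = 1) := by
  have hdet : ∀ h : G, ‖LinearMap.det (ρ h)‖ ≠ 0 := by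
    intro h
    have h1 : LinearMap.det (ρ h) * LinearMap.det (ρ h⁻¹) = 1 := by
      rw [← map_mul, ← map_mul, mul_inv_cancel, map_one, map_one]
    intro hc
    have h0 : LinearMap.det (ρ h) = 0 := by
      simpa using (norm_eq_zero.mp hc)
    rw [h0, zero_mul] at h1; exact zero_ne_one h1
  have hpos : ∀ h : G, 0 < ‖LinearMap.det (ρ h)‖ :=
    fun h => (norm_nonneg _).lt_of_ne (Ne.symm (hdet h))
  set f : G →* Multiplicative ℝ :=
    { toFun := fun h => Multiplicative.ofAdd (Real.log (‖LinearMap.det (ρ h)‖))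
      map_one' := by simp
      map_mul' := by
        intro a b
        have : ‖LinearMap.det (ρ (a * b))‖
            = ‖LinearMap.det (ρ a)‖ * ‖LinearMap.det (ρ b)‖ := by
          rw [map_mul, map_mul, norm_mul]
        simp only [this, Real.log_mul (hdet a) (hdet b), ofAdd_add] } with hf
  set F₁ : Abelianization G →* Multiplicative ℝ := Abelianization.lift f with hF₁
  have hker : CommGroup.torsion (Abelianization G) ≤ F₁.ker := by
    intro x hx
    obtain ⟨n, hn, hxn⟩ := isOfFinOrder_iff_pow_eq_one.mp hx
    have h1 : (F₁ x) ^ n = 1 := by rw [← map_pow, hxn, map_one]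
    have h2 : (n : ℝ) * Multiplicative.toAdd (F₁ x) = 0 := by
      have := congrArg Multiplicative.toAdd h1
      simpa [toAdd_pow, nsmul_eq_mul] using this
    have h3 : Multiplicative.toAdd (F₁ x) = 0 := by
      rcases mul_eq_zero.mp h2 with h | h
      · exact absurd h (by exact_mod_cast hn.ne')
      · exact h
    simp only [MonoidHom.mem_ker]
    have := congrArg Multiplicative.ofAdd h3
    simpa using this
  set F₂ := QuotientGroup.lift (CommGroup.torsion (Abelianization G)) F₁ hker with hF₂
  have key := congrArg F₂ htrans
  simp only [map_prod, map_zpow] at key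
  have hF₂mk : ∀ h : G, F₂ ((QuotientGroup.mk' (CommGroup.torsion (Abelianization G)))
      (Abelianization.of h)) = f h := by
    intro h
    simp [hF₂, hF₁]
  simp only [hF₂mk, hf, MonoidHom.coe_mk, OneHom.coe_mk] at key
  have hconv : ∀ (rr : Fin N → ℕ) (gg : (n : Fin N) → Fin (rr n) → G),
      (∏ n : Fin N, (∏ b, Multiplicative.ofAdd
        (Real.log (‖LinearMap.det (ρ (gg n b))‖))) ^ ((-1 : ℤ) ^ (n : ℕ)))
      = Multiplicative.ofAdd (∑ n : Fin N, ((-1 : ℤ) ^ (n : ℕ)) •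
          ∑ b, Real.log (‖LinearMap.det (ρ (gg n b))‖)) := by
    intro rr gg
    rw [ofAdd_sum]
    refine Finset.prod_congr rfl fun n _ => ?_
    rw [ofAdd_zsmul, ofAdd_sum]
  rw [hconv r g, hconv r' g'] at key
  have hS := Multiplicative.ofAdd.injective key
  have hlog : ∀ (rr : Fin N → ℕ) (gg : (n : Fin N) → Fin (rr n) → G),
      Real.log (∏ n : Fin N,
        (∏ b, ‖LinearMap.det (ρ (gg n b))‖) ^ ((-1 : ℤ) ^ (n : ℕ)))
      = ∑ n : Fin N, ((-1 : ℤ) ^ (n : ℕ)) •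
          ∑ b, Real.log (‖LinearMap.det (ρ (gg n b))‖) := by
    intro rr gg
    rw [Real.log_prod]
    · refine Finset.sum_congr rfl fun n _ => ?_
      rw [Real.log_zpow, Real.log_prod (fun b _ => hdet _), zsmul_eq_mul]
    · intro n _
      exact zpow_ne_zero _ (Finset.prod_ne_zero_iff.mpr fun b _ => hdet _)
  have hP : ∀ (rr : Fin N → ℕ) (gg : (n : Fin N) → Fin (rr n) → G),
      0 < ∏ n : Fin N,
        (∏ b, ‖LinearMap.det (ρ (gg n b))‖) ^ ((-1 : ℤ) ^ (n : ℕ)) := by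
    intro rr gg
    exact Finset.prod_pos fun n _ =>
      zpow_pos (Finset.prod_pos fun b _ => hpos _) _
  constructor
  · exact Real.log_injOn_pos (Set.mem_Ioi.mpr (hP r g)) (Set.mem_Ioi.mpr (hP r' g'))
      (by rw [hlog r g, hlog r' g', hS])
  · intro h1
    simp [h1]
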